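/- Uniqueness of split-Fourier coefficients: let c : ℤ → ℂ' be finitely supported and suppose Σ_{n∈ℤ} c_n · e^{k'nθ} = 0 for every θ ∈ ℝ. Then c_n = 0 for every n ∈ ℤ. Consequently, two finite split-Fourier expansions Σ c_n e^{k'nθ} and Σ c'_n e^{k'nθ} that agree for all θ ∈ ℝ have identical coefficients. -/
import Mathlib


noncomputable section

/-- The split-complex numbers `ℂ'`, as the set `ℝ × ℝ`
(writing `a + k'b` for `(a, b)`). -/
abbrev SC : Type := ℝ × ℝ

namespace SC

/-- Split-complex multiplication: `(a,b)·(c,d) = (ac+bd, ad+bc)`, so `k'² = 1`. -/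
def mul' (z w : SC) : SC := (z.1 * w.1 + z.2 * w.2, z.1 * w.2 + z.2 * w.1)

/-- Split-complex conjugation: `conj (a + k'b) = a - k'b`. -/
def conj' (z : SC) : SC := (z.1, -z.2)

/-- Multiplication by `k'`. -/
def kmul (z : SC) : SC := (z.2, z.1)

/-- Split-complex natural power. -/
def pow' (z : SC) : ℕ → SC
  | 0 => (1, 0)
  | n + 1 => mul' (pow' z n) z

end SC

/-- The squared "norm" `|a + k'b|² = b² - a²`. -/
def snormSq (w : SC) : ℝ := w.2 ^ 2 - w.1 ^ 2

/-- Partial derivative in the `x` direction. -/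
def pdx {E : Type*} [NormedAddCommGroup E] [NormedSpace ℝ E] (F : SC → E) (p : SC) : E :=
  fderiv ℝ F p (1, 0)

/-- Partial derivative in the `y` direction. -/
def pdy {E : Type*} [NormedAddCommGroup E] [NormedSpace ℝ E] (F : SC → E) (p : SC) : E :=
  fderiv ℝ F p (0, 1)

/-- `F_z = (1/2)(F_x + k' F_y)` of a split-complex valued map. -/
def dz (F : SC → SC) (p : SC) : SC := (1 / 2 : ℝ) • (pdx F p + SC.kmul (pdy F p))

/-- `F_z̄ = (1/2)(F_x - k' F_y)` of a split-complex valued map. -/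
def dzbar (F : SC → SC) (p : SC) : SC := (1 / 2 : ℝ) • (pdx F p - SC.kmul (pdy F p))

/-- `f_z = (1/2)(f_x + k' f_y)` of a real valued map. -/
def rdz (f : SC → ℝ) (p : SC) : SC := (pdx f p / 2, pdy f p / 2)

/-- Lorentz–Minkowski 3-space `𝕃³`, as `ℝ × ℝ × ℝ`. -/
abbrev L3 : Type := ℝ × ℝ × ℝ

/-- The Lorentzian inner product `⟨a,b⟩ = -a₁b₁ + a₂b₂ + a₃b₃`. -/
def ldot (a b : L3) : ℝ := -(a.1 * b.1) + a.2.1 * b.2.1 + a.2.2 * b.2.2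

/-- The conditions for a (smooth) map `F = (u,v,ω) : Ω → 𝕃³` to be a generalized timelike
minimal surface: `F_xx - F_yy = 0`, conformality, and `-|u_z|² + |v_z|² + |ω_z|² ≢ 0` on `Ω`. -/
def IsGTM (Ω : Set SC) (F : SC → L3) : Prop :=
  (∀ p ∈ Ω, pdx (pdx F) p = pdy (pdy F) p) ∧
  (∀ p ∈ Ω, ldot (pdx F p) (pdx F p) + ldot (pdy F p) (pdy F p) = 0) ∧
  (∀ p ∈ Ω, ldot (pdx F p) (pdy F p) = 0) ∧
  ¬ (∀ p ∈ Ω,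
      -snormSq (rdz (fun q => (F q).1) p) + snormSq (rdz (fun q => (F q).2.1) p) +
        snormSq (rdz (fun q => (F q).2.2) p) = 0)

/-- The split exponential `e^{k'nθ} = cosh nθ + k' sinh nθ` for `n : ℤ`. -/
def sexpZ (n : ℤ) (θ : ℝ) : SC := (Real.cosh (n * θ), Real.sinh (n * θ))


def expChar (n : ℤ) : Multiplicative ℝ →* ℝ where
  toFun θ := Real.exp (n * θ.toAdd)
  map_one' := by simp
  map_mul' x y := by simp [mul_add, Real.exp_add]

lemma expChar_injective : Function.Injective expChar := by
  intro n m h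
  have := congrFun (congrArg (fun f : Multiplicative ℝ →* ℝ => (f : Multiplicative ℝ → ℝ))
    h) (Multiplicative.ofAdd (1 : ℝ))
  simp only [expChar, MonoidHom.coe_mk, OneHom.coe_mk, toAdd_ofAdd, mul_one] at this
  exact_mod_cast Real.exp_injective this

lemma exp_li (s : Finset ℤ) (d : ℤ → ℝ)
    (h : ∀ θ : ℝ, ∑ n ∈ s, d n * Real.exp (n * θ) = 0) : ∀ n ∈ s, d n = 0 := by
  have li : LinearIndependent ℝ (fun n : ℤ => (expChar n : Multiplicative ℝ → ℝ)) :=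
    (linearIndependent_monoidHom (Multiplicative ℝ) ℝ).comp expChar expChar_injective
  refine linearIndependent_iff'.mp li s d ?_
  funext θ
  simpa [expChar, Finset.sum_apply] using h θ.toAdd

lemma key (c : ℤ → SC) (hc : (Function.support c).Finite)
    (h0 : ∀ θ : ℝ, ∑ᶠ n : ℤ, SC.mul' (c n) (sexpZ n θ) = 0) : ∀ n : ℤ, c n = 0 := by
  classical
  set s := hc.toFinset with hs
  have hsub : ∀ θ : ℝ, Function.support (fun n => SC.mul' (c n) (sexpZ n θ)) ⊆ ↑s := by
    intro θ n hn
    simp only [hs, Set.Finite.coe_toFinset, Function.mem_support]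
    intro hcn
    apply hn
    simp [SC.mul', hcn, Prod.ext_iff]
  have hsum : ∀ θ : ℝ, ∑ n ∈ s, SC.mul' (c n) (sexpZ n θ) = 0 := by
    intro θ
    rw [← finsum_eq_finset_sum_of_support_subset _ (hsub θ)]
    exact h0 θ
  have hA : ∀ θ : ℝ, ∑ n ∈ s, ((c n).1 * Real.cosh (n * θ) + (c n).2 * Real.sinh (n * θ)) = 0 := by
    intro θ
    have := congrArg Prod.fst (hsum θ)
    simpa [Prod.fst_sum, SC.mul', sexpZ] using this
  have hB : ∀ θ : ℝ, ∑ n ∈ s, ((c n).1 * Real.sinh (n * θ) + (c n).2 * Real.cosh (n * θ)) = 0 := by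
    intro θ
    have := congrArg Prod.snd (hsum θ)
    simpa [Prod.snd_sum, SC.mul', sexpZ] using this
  have hp : ∀ n ∈ s, (c n).1 + (c n).2 = 0 := by
    refine exp_li s _ (fun θ => ?_)
    have : ∀ n ∈ s, ((c n).1 + (c n).2) * Real.exp (n * θ) =
        ((c n).1 * Real.cosh (n * θ) + (c n).2 * Real.sinh (n * θ)) +
        ((c n).1 * Real.sinh (n * θ) + (c n).2 * Real.cosh (n * θ)) := by
      intro n _
      rw [← Real.cosh_add_sinh]
      ring
    rw [Finset.sum_congr rfl this, Finset.sum_add_distrib, hA θ, hB θ, add_zero]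
  have hm : ∀ n ∈ s, (c n).1 - (c n).2 = 0 := by
    refine exp_li s _ (fun θ => ?_)
    have : ∀ n ∈ s, ((c n).1 - (c n).2) * Real.exp (n * θ) =
        ((c n).1 * Real.cosh (n * (-θ)) + (c n).2 * Real.sinh (n * (-θ))) -
        ((c n).1 * Real.sinh (n * (-θ)) + (c n).2 * Real.cosh (n * (-θ))) := by
      intro n _
      have h1 : (n : ℝ) * (-θ) = -(n * θ) := by ring
      rw [h1, Real.cosh_neg, Real.sinh_neg, ← Real.cosh_add_sinh]
      ring
    rw [Finset.sum_congr rfl this, Finset.sum_sub_distrib, hA (-θ), hB (-θ), sub_zero]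
  intro n
  by_cases hn : n ∈ s
  · have h1 := hp n hn
    have h2 := hm n hn
    have e1 : (c n).1 = 0 := by linarith
    have e2 : (c n).2 = 0 := by linarith
    exact Prod.ext e1 e2
  · by_contra hne
    exact hn (by simp [hs, Function.mem_support, hne])

/-- uniqueness of split-Fourier coefficients: if `c : ℤ → ℂ'` is finitely
supported and `Σₙ cₙ e^{k'nθ} = 0` for all `θ`, then `c ≡ 0`; consequently two finite
split-Fourier expansions agreeing for all `θ` have identical coefficients. -/
theorem splitFourier_coeff_unique (c c' : ℤ → SC)
    (hc : (Function.support c).Finite) (hc' : (Function.support c').Finite) :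
    ((∀ θ : ℝ, ∑ᶠ n : ℤ, SC.mul' (c n) (sexpZ n θ) = 0) → ∀ n : ℤ, c n = 0) ∧
    ((∀ θ : ℝ, ∑ᶠ n : ℤ, SC.mul' (c n) (sexpZ n θ) = ∑ᶠ n : ℤ, SC.mul' (c' n) (sexpZ n θ)) →
      c = c') := by
  constructor
  · exact key c hc
  · intro h
    have hd : (Function.support (fun n => c n - c' n)).Finite := by
      apply Set.Finite.subset (hc.union hc')
      intro n hn
      simp only [Function.mem_support] at hn
      by_contra hmem
      simp only [Set.mem_union, Function.mem_support, not_or, not_not] at hmem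
      exact hn (by rw [hmem.1, hmem.2, sub_self])
    have h0 : ∀ θ : ℝ, ∑ᶠ n : ℤ, SC.mul' ((fun n => c n - c' n) n) (sexpZ n θ) = 0 := by
      intro θ
      have hdist : ∀ n : ℤ, SC.mul' (c n - c' n) (sexpZ n θ) =
          SC.mul' (c n) (sexpZ n θ) - SC.mul' (c' n) (sexpZ n θ) := by
        intro n
        simp [SC.mul', Prod.ext_iff]
        constructor <;> ring
      have hf1 : (Function.support (fun n => SC.mul' (c n) (sexpZ n θ))).Finite := by
        apply hc.subset
        intro n hn
        simp only [Function.mem_support] at hn ⊢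
        intro hcn
        exact hn (by simp [SC.mul', hcn, Prod.ext_iff])
      have hf2 : (Function.support (fun n => SC.mul' (c' n) (sexpZ n θ))).Finite := by
        apply hc'.subset
        intro n hn
        simp only [Function.mem_support] at hn ⊢
        intro hcn
        exact hn (by simp [SC.mul', hcn, Prod.ext_iff])
      simp only [hdist]
      rw [finsum_sub_distrib hf1 hf2, h θ, sub_self]
    have hz := key _ hd h0
    funext n
    simpa [sub_eq_zero] using hz n
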